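/- Let Y_1, ..., Y_n be ℝ^v-valued square-integrable random vectors partitioned into clusters by g : {1,…,n} → {1,…,G} and by t : {1,…,n} → {1,…,T}. Then Σ_i Σ_{j: g(j)=g(i)} E[Y_i Y_j′] + Σ_i Σ_{j: t(j)=t(i)} E[Y_i Y_j′] − [ Σ_i Σ_{j: g(j)=g(i)} Cov(Y_i, Y_j) + Σ_i Σ_{j: t(j)=t(i)} Cov(Y_i, Y_j) − Σ_i Σ_{j: g(j)=g(i), t(j)=t(i)} Cov(Y_i, Y_j) ] is positive semidefinite. -/

import Mathlib

open MeasureTheory Matrix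

/-- Uncentered second moment matrix `E[X Y']` of two random vectors. -/
noncomputable def m2Mat {Ω : Type*} [MeasurableSpace Ω] (μ : Measure Ω) {v : ℕ}
    (X Y : Ω → Fin v → ℝ) : Matrix (Fin v) (Fin v) ℝ :=
  Matrix.of fun a b => ∫ ω, X ω a * Y ω b ∂μ

/-- Covariance matrix `Cov(X, Y) = E[(X - EX)(Y - EY)']` of two random vectors. -/
noncomputable def covMat {Ω : Type*} [MeasurableSpace Ω] (μ : Measure Ω) {v : ℕ}
    (X Y : Ω → Fin v → ℝ) : Matrix (Fin v) (Fin v) ℝ :=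
  Matrix.of fun a b =>
    ∫ ω, (X ω a - ∫ x, X x a ∂μ) * (Y ω b - ∫ x, Y x b ∂μ) ∂μ

section Aux

variable {Ω : Type*} [MeasurableSpace Ω] {μ : Measure Ω}

lemma l2_mul_int {f g : Ω → ℝ} (hf : MemLp f 2 μ) (hg : MemLp g 2 μ) :
    Integrable (fun ω => f ω * g ω) μ := by
  have h := hg.smul (p := 2) (q := 2) (r := 1) hf
  rw [memLp_one_iff_integrable] at h
  exact h.congr (Filter.Eventually.of_forall fun ω => by simp [mul_comm])

lemma group_sum {n : ℕ} {κ : Type*} [Fintype κ] [DecidableEq κ] (c : Fin n → κ)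
    (B : Fin n → Fin n → ℝ) :
    ∑ i, ∑ j ∈ Finset.univ.filter (fun j => c j = c i), B i j
      = ∑ k, ∑ i ∈ Finset.univ.filter (fun i => c i = k),
          ∑ j ∈ Finset.univ.filter (fun j => c j = k), B i j := by
  rw [← Finset.sum_fiberwise Finset.univ c
    (fun i => ∑ j ∈ Finset.univ.filter (fun j => c j = c i), B i j)]
  refine Finset.sum_congr rfl fun k _ => Finset.sum_congr rfl fun i hi => ?_
  rw [(Finset.mem_filter.1 hi).2]

lemma sym_swap {n : ℕ} (P : Fin n → Fin n → Prop) [∀ i, DecidablePred (P i)]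
    (hP : ∀ i j, P i j ↔ P j i) (F : Fin n → Fin n → ℝ) :
    ∑ i, ∑ j ∈ Finset.univ.filter (fun j => P i j), F i j
      = ∑ i, ∑ j ∈ Finset.univ.filter (fun j => P i j), F j i := by
  rw [Finset.sum_comm' (s' := fun j => Finset.univ.filter (fun i => P j i)) (t' := Finset.univ)]
  intro i j
  simp [hP i j]

/-- A double sum of matrices over a symmetric relation, where the matrix family is
transpose-symmetric, is Hermitian. -/
lemma herm_sum {n v : ℕ} (P : Fin n → Fin n → Prop) [∀ i, DecidablePred (P i)]
    (hP : ∀ i j, P i j ↔ P j i) (F : Fin n → Fin n → Matrix (Fin v) (Fin v) ℝ)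
    (hF : ∀ i j a b, F i j b a = F j i a b) :
    (∑ i, ∑ j ∈ Finset.univ.filter (fun j => P i j), F i j).IsHermitian := by
  show _ = _
  ext a b
  simp only [Matrix.conjTranspose_apply, Matrix.sum_apply, star_trivial]
  calc ∑ i, ∑ j ∈ Finset.univ.filter (fun j => P i j), F i j b a
      = ∑ i, ∑ j ∈ Finset.univ.filter (fun j => P i j), F j i a b :=
        Finset.sum_congr rfl fun i _ => Finset.sum_congr rfl fun j _ => hF i j a b
    _ = ∑ i, ∑ j ∈ Finset.univ.filter (fun j => P i j), F i j a b :=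
        (sym_swap P hP (fun i j => F i j a b)).symm

end Aux

theorem stmt_11 {Ω : Type*} [MeasurableSpace Ω] (μ : Measure Ω) [IsProbabilityMeasure μ]
    (n G T v : ℕ) (Y : Fin n → Ω → Fin v → ℝ)
    (hmem : ∀ i, ∀ a : Fin v, MemLp (fun ω => Y i ω a) 2 μ)
    (g : Fin n → Fin G) (t : Fin n → Fin T) :
    Matrix.PosSemidef
      ((∑ i, ∑ j ∈ Finset.univ.filter (fun j => g j = g i), m2Mat μ (Y i) (Y j))
        + (∑ i, ∑ j ∈ Finset.univ.filter (fun j => t j = t i), m2Mat μ (Y i) (Y j))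
        - ((∑ i, ∑ j ∈ Finset.univ.filter (fun j => g j = g i), covMat μ (Y i) (Y j))
          + (∑ i, ∑ j ∈ Finset.univ.filter (fun j => t j = t i), covMat μ (Y i) (Y j))
          - (∑ i, ∑ j ∈ Finset.univ.filter (fun j => g j = g i ∧ t j = t i),
              covMat μ (Y i) (Y j)))) := by
  have hm2sym : ∀ i j (a b : Fin v), m2Mat μ (Y i) (Y j) b a = m2Mat μ (Y j) (Y i) a b := by
    intro i j a b
    simp only [m2Mat, Matrix.of_apply]
    congr 1; funext ω; ring
  have hcovsym : ∀ i j (a b : Fin v), covMat μ (Y i) (Y j) b a = covMat μ (Y j) (Y i) a b := by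
    intro i j a b
    simp only [covMat, Matrix.of_apply]
    congr 1; funext ω; ring
  refine Matrix.PosSemidef.of_dotProduct_mulVec_nonneg ?_ ?_
  · -- Hermitian
    refine Matrix.IsHermitian.sub (Matrix.IsHermitian.add ?_ ?_)
      (Matrix.IsHermitian.sub (Matrix.IsHermitian.add ?_ ?_) ?_)
    · exact herm_sum _ (fun i j => eq_comm) _ hm2sym
    · exact herm_sum _ (fun i j => eq_comm) _ hm2sym
    · exact herm_sum _ (fun i j => eq_comm) _ hcovsym
    · exact herm_sum _ (fun i j => eq_comm) _ hcovsym
    · exact herm_sum _ (fun i j => and_congr eq_comm eq_comm) _ hcovsym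
  · intro x
    rw [star_trivial]
    -- the scalar random variables
    set f : Fin n → Ω → ℝ := fun i ω => ∑ a, x a * Y i ω a with hf_def
    set h : Fin n → Ω → ℝ := fun i ω => ∑ a, x a * (Y i ω a - ∫ x', Y i x' a ∂μ) with hh_def
    set c : Fin n → ℝ := fun i => ∑ a, x a * ∫ ω, Y i ω a ∂μ with hc_def
    have hYc2 : ∀ i (a : Fin v), MemLp (fun ω => Y i ω a - ∫ x', Y i x' a ∂μ) 2 μ :=
      fun i a => (hmem i a).sub (memLp_const _)
    have hf2 : ∀ i, MemLp (f i) 2 μ := fun i =>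
      memLp_finset_sum _ (fun a _ => (hmem i a).const_mul (x a))
    have hh2 : ∀ i, MemLp (h i) 2 μ := fun i =>
      memLp_finset_sum _ (fun a _ => (hYc2 i a).const_mul (x a))
    have hfint : ∀ i, Integrable (f i) μ := fun i => (hf2 i).integrable one_le_two
    -- quadratic form of a second-moment-type matrix
    have key : ∀ (X Z : Ω → Fin v → ℝ), (∀ a, MemLp (fun ω => X ω a) 2 μ) →
        (∀ a, MemLp (fun ω => Z ω a) 2 μ) →
        x ⬝ᵥ (Matrix.of fun a b => ∫ ω, X ω a * Z ω b ∂μ) *ᵥ x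
          = ∫ ω, (∑ a, x a * X ω a) * (∑ b, x b * Z ω b) ∂μ := by
      intro X Z hX hZ
      have hint : ∀ a b : Fin v, Integrable (fun ω => X ω a * Z ω b) μ :=
        fun a b => l2_mul_int (hX a) (hZ b)
      have e1 : (fun ω => (∑ a, x a * X ω a) * (∑ b, x b * Z ω b))
          = fun ω => ∑ a, ∑ b, (x a * x b) * (X ω a * Z ω b) := by
        funext ω
        rw [Finset.sum_mul]
        refine Finset.sum_congr rfl fun a _ => ?_
        rw [Finset.mul_sum]
        exact Finset.sum_congr rfl fun b _ => by ring
      rw [e1, integral_finset_sum _ (fun a _ =>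
        integrable_finset_sum _ (fun b _ => (hint a b).const_mul _))]
      have e2 : ∀ a : Fin v, (∫ ω, ∑ b, (x a * x b) * (X ω a * Z ω b) ∂μ)
          = ∑ b, (x a * x b) * ∫ ω, X ω a * Z ω b ∂μ := by
        intro a
        rw [integral_finset_sum _ (fun b _ => (hint a b).const_mul _)]
        exact Finset.sum_congr rfl fun b _ => integral_const_mul _ _
      simp only [e2]
      simp only [dotProduct, Matrix.mulVec, Matrix.of_apply, Finset.mul_sum]
      exact (Finset.sum_congr rfl fun a _ => Finset.sum_congr rfl fun b _ => by ring).symm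
    have qm2 : ∀ i j, x ⬝ᵥ m2Mat μ (Y i) (Y j) *ᵥ x = ∫ ω, f i ω * f j ω ∂μ :=
      fun i j => key (Y i) (Y j) (hmem i) (hmem j)
    have qcov : ∀ i j, x ⬝ᵥ covMat μ (Y i) (Y j) *ᵥ x = ∫ ω, h i ω * h j ω ∂μ :=
      fun i j => key _ _ (hYc2 i) (hYc2 j)
    -- h i = f i - c i pointwise
    have hhfc : ∀ i ω, h i ω = f i ω - c i := by
      intro i ω
      simp only [hh_def, hf_def, hc_def, mul_sub, Finset.sum_sub_distrib]
    have hcf : ∀ i, ∫ ω, f i ω ∂μ = c i := by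
      intro i
      rw [hf_def]
      simp only
      rw [integral_finset_sum _ (fun a _ => ((hmem i a).integrable one_le_two).const_mul _)]
      exact Finset.sum_congr rfl fun a _ => integral_const_mul _ _
    have hsplit : ∀ i j, ∫ ω, f i ω * f j ω ∂μ = (∫ ω, h i ω * h j ω ∂μ) + c i * c j := by
      intro i j
      have e : ∀ ω, f i ω * f j ω
          = h i ω * h j ω + (c i * f j ω + (c j * f i ω - c i * c j)) := by
        intro ω; rw [hhfc, hhfc]; ring
      have I2b : Integrable (fun ω => c j * f i ω - c i * c j) μ :=
        ((hfint i).const_mul _).sub (integrable_const _)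
      have I2 : Integrable (fun ω => c i * f j ω + (c j * f i ω - c i * c j)) μ :=
        ((hfint j).const_mul _).add I2b
      rw [show (fun ω => f i ω * f j ω)
          = fun ω => h i ω * h j ω + (c i * f j ω + (c j * f i ω - c i * c j)) from funext e]
      rw [integral_add (l2_mul_int (hh2 i) (hh2 j)) I2]
      rw [integral_add ((hfint j).const_mul (c i)) I2b]
      rw [integral_sub ((hfint i).const_mul (c j)) (integrable_const _)]
      rw [integral_const_mul, integral_const_mul, integral_const, hcf, hcf]
      simp [measure_univ]
      ring
    -- push the quadratic form through sums and differences
    have push : ∀ (A B : Matrix (Fin v) (Fin v) ℝ), x ⬝ᵥ (A - B) *ᵥ x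
        = x ⬝ᵥ A *ᵥ x - x ⬝ᵥ B *ᵥ x := by
      intro A B
      rw [Matrix.sub_mulVec, dotProduct_sub]
    have pushA : ∀ (A B : Matrix (Fin v) (Fin v) ℝ), x ⬝ᵥ (A + B) *ᵥ x
        = x ⬝ᵥ A *ᵥ x + x ⬝ᵥ B *ᵥ x := by
      intro A B
      rw [Matrix.add_mulVec, dotProduct_add]
    have pushS : ∀ {ι : Type} (s : Finset ι) (F : ι → Matrix (Fin v) (Fin v) ℝ),
        x ⬝ᵥ (∑ i ∈ s, F i) *ᵥ x = ∑ i ∈ s, x ⬝ᵥ F i *ᵥ x := by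
      intro ι s F
      classical
      induction s using Finset.induction_on with
      | empty => simp
      | insert _ _ hni ih => simp [Finset.sum_insert hni, pushA, ih]
    rw [push, pushA, push, pushA]
    simp only [pushS, qm2, qcov]
    simp only [hsplit, Finset.sum_add_distrib]
    have int_eq : ∀ S : Finset (Fin n), ∑ i ∈ S, ∑ j ∈ S, (∫ ω, h i ω * h j ω ∂μ)
        = ∫ ω, (∑ i ∈ S, h i ω) ^ 2 ∂μ := by
      intro S
      have e : (fun ω => (∑ i ∈ S, h i ω) ^ 2)
          = fun ω => ∑ i ∈ S, ∑ j ∈ S, h i ω * h j ω := by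
        funext ω; rw [sq, Finset.sum_mul_sum]
      rw [e, integral_finset_sum _ (fun i _ => integrable_finset_sum _
        (fun j _ => l2_mul_int (hh2 i) (hh2 j)))]
      exact Finset.sum_congr rfl fun i _ => (integral_finset_sum _
        (fun j _ => l2_mul_int (hh2 i) (hh2 j))).symm
    have n1 : 0 ≤ ∑ i, ∑ j ∈ Finset.univ.filter (fun j => g j = g i), c i * c j := by
      rw [group_sum]
      refine Finset.sum_nonneg fun k _ => ?_
      rw [← Finset.sum_mul_sum]
      exact mul_self_nonneg _
    have n2 : 0 ≤ ∑ i, ∑ j ∈ Finset.univ.filter (fun j => t j = t i), c i * c j := by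
      rw [group_sum]
      refine Finset.sum_nonneg fun k _ => ?_
      rw [← Finset.sum_mul_sum]
      exact mul_self_nonneg _
    have n3 : 0 ≤ ∑ i, ∑ j ∈ Finset.univ.filter (fun j => g j = g i ∧ t j = t i),
        ∫ ω, h i ω * h j ω ∂μ := by
      have efil : ∀ i : Fin n, Finset.univ.filter (fun j => g j = g i ∧ t j = t i)
          = Finset.univ.filter (fun j => (g j, t j) = (g i, t i)) := by
        intro i
        apply Finset.filter_congr
        intro j _
        simp [Prod.ext_iff]
      simp only [efil]
      rw [group_sum (fun i => (g i, t i)) (fun i j => ∫ ω, h i ω * h j ω ∂μ)]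
      refine Finset.sum_nonneg fun k _ => ?_
      rw [int_eq]
      exact integral_nonneg fun ω => sq_nonneg _
    linarith [n1, n2, n3]
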